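/- Consider N agents with decision variables x_i ∈ ℝ^{n_i}, x = (x₁,…,x_N) ∈ ℝ^n, where each local objective f_i[t] : ℝ^{n_i} → ℝ is twice differentiable and σ-strongly convex with ν-Lipschitz gradient, and the coupling constraints (the stacked matrix A ∈ ℝ^{m×n} and vector b ∈ ℝ^m) are the same at times t and t+1. Assume F̄[t+1] − F̄[t] is Lipschitz continuous with constant κ. Let x*[t] be the (unique) minimizer of F̄[t] and let y*[t] = (y*_{ij}[t]) be the corresponding dual solution of the consensus formulation, y*_{ij}[t] = −∇_{x_j^i} F̄_i[t] evaluated at the consensus-consistent point built from x*[t]. Let |s|^max be the maximum number of agents coupled by a single constraint. Then ‖x*[t+1] − x*[t]‖ ≤ σ⁻¹κ and ‖y*[t+1] − y*[t]‖ ≤ ‖A‖_F² · ((|s|^max − 1)/|s|^max) · βc · σ⁻¹κ. -/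

import Mathlib

open scoped Classical RealInnerProductSpace

/-! ### Auxiliary lemmas -/


lemma softplus_hasDerivAt (s : ℝ) :
    HasDerivAt (fun u => Real.log (Real.exp u + 1)) (Real.exp s / (Real.exp s + 1)) s := by
  have h := ((Real.hasDerivAt_exp s).add_const 1).log (by positivity)
  simpa using h

lemma sigmoid_mono : Monotone (fun s : ℝ => Real.exp s / (Real.exp s + 1)) := by
  intro p q hpq
  have hp : (0:ℝ) < Real.exp p + 1 := by positivity
  have hq : (0:ℝ) < Real.exp q + 1 := by positivity
  rw [div_le_div_iff₀ hp hq]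
  nlinarith [Real.exp_le_exp.2 hpq, Real.exp_pos p, Real.exp_pos q]

lemma softplus_convex : ConvexOn ℝ Set.univ (fun s : ℝ => Real.log (Real.exp s + 1)) := by
  apply Monotone.convexOn_univ_of_deriv
  · exact fun s => (softplus_hasDerivAt s).differentiableAt
  · intro p q hpq
    rw [(softplus_hasDerivAt p).deriv, (softplus_hasDerivAt q).deriv]
    exact sigmoid_mono hpq

lemma sigmoid_lipschitz (p q : ℝ) :
    |Real.exp p / (Real.exp p + 1) - Real.exp q / (Real.exp q + 1)| ≤ |p - q| := by
  wlog h : q ≤ p generalizing p q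
  · rw [abs_sub_comm, abs_sub_comm p q]; exact this q p (le_of_not_ge h)
  have h1 : Real.exp q ≤ Real.exp p := Real.exp_le_exp.2 h
  have hp : (0:ℝ) < Real.exp p + 1 := by positivity
  have hq : (0:ℝ) < Real.exp q + 1 := by positivity
  rw [abs_of_nonneg (sub_nonneg.2 (sigmoid_mono h)), abs_of_nonneg (sub_nonneg.2 h)]
  have key : Real.exp p / (Real.exp p + 1) - Real.exp q / (Real.exp q + 1)
      = (Real.exp p - Real.exp q) / ((Real.exp p + 1) * (Real.exp q + 1)) := by
    field_simp; ring
  rw [key]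
  have h2 : (Real.exp p - Real.exp q) / ((Real.exp p + 1) * (Real.exp q + 1))
      ≤ (Real.exp p - Real.exp q) / Real.exp p := by
    apply div_le_div_of_nonneg_left (by linarith) (Real.exp_pos p)
    nlinarith [Real.exp_pos p, Real.exp_pos q]
  have h3 : (Real.exp p - Real.exp q) / Real.exp p ≤ p - q := by
    rw [div_le_iff₀ (Real.exp_pos p)]
    have := Real.add_one_le_exp (q - p)
    have hexp : Real.exp (q - p) * Real.exp p = Real.exp q := by
      rw [← Real.exp_add]; ring_nf
    nlinarith [Real.exp_pos p]
  linarith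

lemma euclid_inner_eq_sum {d : ℕ} (x y : EuclideanSpace ℝ (Fin d)) :
    ⟪x, y⟫ = ∑ k, x k * y k := by
  simp [PiLp.inner_apply, RCLike.inner_apply, conj_trivial]
  exact Finset.sum_congr rfl fun k _ => mul_comm _ _

lemma hasGradientAt_softplus_sum {d : ℕ} {ρ : Type*} (T : Finset ρ)
    (w C : ρ → ℝ) (av : ρ → EuclideanSpace ℝ (Fin d)) (K q c : ℝ) (x : EuclideanSpace ℝ (Fin d)) :
    HasGradientAt (fun v => K + q * ∑ r ∈ T, w r *
        Real.log (Real.exp (c * ⟪av r, v⟫ + C r) + 1))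
      (∑ r ∈ T, (q * w r * c *
        (Real.exp (c * ⟪av r, x⟫ + C r) / (Real.exp (c * ⟪av r, x⟫ + C r) + 1))) • av r) x := by
  have hterm : ∀ r ∈ T, HasFDerivAt
      (fun v : EuclideanSpace ℝ (Fin d) => w r * Real.log (Real.exp (c * ⟪av r, v⟫ + C r) + 1))
      ((w r * (Real.exp (c * ⟪av r, x⟫ + C r) / (Real.exp (c * ⟪av r, x⟫ + C r) + 1)) * c)
        • (innerSL ℝ (av r))) x := by
    intro r _
    have hlin : HasFDerivAt (fun v : EuclideanSpace ℝ (Fin d) => c * ⟪av r, v⟫ + C r)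
        (c • innerSL ℝ (av r)) x := by
      have := ((innerSL ℝ (av r)).hasFDerivAt (x := x)).const_mul c
      exact this.add_const (C r)
    have hcomp := (softplus_hasDerivAt (c * ⟪av r, x⟫ + C r)).comp_hasFDerivAt x hlin
    have := hcomp.const_mul (w r)
    refine this.congr_fderiv ?_
    ext v
    simp [ContinuousLinearMap.smul_apply]
    ring
  have hsum := (HasFDerivAt.fun_sum hterm).const_mul q
  have hK := hsum.const_add K
  rw [hasGradientAt_iff_hasFDerivAt]
  refine hK.congr_fderiv ?_
  ext v
  simp [ContinuousLinearMap.smul_apply, InnerProductSpace.toDual_apply_apply, inner_sum,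
    real_inner_smul_left, Finset.mul_sum]
  apply Finset.sum_congr rfl
  intro r _
  ring

lemma sum_mul_le_sqrt_mul_sqrt {ι : Type*} (s : Finset ι) (x y : ι → ℝ) :
    ∑ i ∈ s, x i * y i ≤ Real.sqrt (∑ i ∈ s, x i ^ 2) * Real.sqrt (∑ i ∈ s, y i ^ 2) := by
  have hx : (0:ℝ) ≤ ∑ i ∈ s, x i ^ 2 := Finset.sum_nonneg fun i _ => sq_nonneg _
  have hcs : (∑ i ∈ s, x i * y i) ^ 2 ≤ (∑ i ∈ s, x i ^ 2) * (∑ i ∈ s, y i ^ 2) :=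
    Finset.sum_mul_sq_le_sq_mul_sq s x y
  calc ∑ i ∈ s, x i * y i ≤ |∑ i ∈ s, x i * y i| := le_abs_self _
  _ = Real.sqrt ((∑ i ∈ s, x i * y i) ^ 2) := (Real.sqrt_sq_eq_abs _).symm
  _ ≤ Real.sqrt ((∑ i ∈ s, x i ^ 2) * (∑ i ∈ s, y i ^ 2)) := Real.sqrt_le_sqrt hcs
  _ = _ := Real.sqrt_mul hx _

lemma l2_triangle {ι : Type*} (s : Finset ι) (x y : ι → ℝ) :
    Real.sqrt (∑ i ∈ s, (x i + y i) ^ 2) ≤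
      Real.sqrt (∑ i ∈ s, x i ^ 2) + Real.sqrt (∑ i ∈ s, y i ^ 2) := by
  have hx : (0:ℝ) ≤ ∑ i ∈ s, x i ^ 2 := Finset.sum_nonneg fun i _ => sq_nonneg _
  have hy : (0:ℝ) ≤ ∑ i ∈ s, y i ^ 2 := Finset.sum_nonneg fun i _ => sq_nonneg _
  have h1 := sum_mul_le_sqrt_mul_sqrt s x y
  have h2 : ∑ i ∈ s, (x i + y i) ^ 2 ≤
      (Real.sqrt (∑ i ∈ s, x i ^ 2) + Real.sqrt (∑ i ∈ s, y i ^ 2)) ^ 2 := by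
    have e : ∑ i ∈ s, (x i + y i) ^ 2
        = (∑ i ∈ s, x i ^ 2) + 2 * (∑ i ∈ s, x i * y i) + (∑ i ∈ s, y i ^ 2) := by
      rw [Finset.mul_sum, ← Finset.sum_add_distrib, ← Finset.sum_add_distrib]
      exact Finset.sum_congr rfl fun i _ => by ring
    rw [e]
    have ex : Real.sqrt (∑ i ∈ s, x i ^ 2) ^ 2 = ∑ i ∈ s, x i ^ 2 := Real.sq_sqrt hx
    have ey : Real.sqrt (∑ i ∈ s, y i ^ 2) ^ 2 = ∑ i ∈ s, y i ^ 2 := Real.sq_sqrt hy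
    nlinarith [h1]
  calc Real.sqrt (∑ i ∈ s, (x i + y i) ^ 2) ≤
      Real.sqrt ((Real.sqrt (∑ i ∈ s, x i ^ 2) + Real.sqrt (∑ i ∈ s, y i ^ 2)) ^ 2) :=
        Real.sqrt_le_sqrt h2
  _ = _ := Real.sqrt_sq (by positivity)

lemma minkowski_finset {ι ρ : Type*} (s : Finset ι) (T : Finset ρ) (u : ρ → ι → ℝ) :
    Real.sqrt (∑ i ∈ s, (∑ r ∈ T, u r i) ^ 2) ≤
      ∑ r ∈ T, Real.sqrt (∑ i ∈ s, (u r i) ^ 2) := by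
  classical
  induction T using Finset.induction with
  | empty => simp
  | insert a T' hr ih =>
    calc Real.sqrt (∑ i ∈ s, (∑ r ∈ insert a T', u r i) ^ 2)
        = Real.sqrt (∑ i ∈ s, (u a i + ∑ r ∈ T', u r i) ^ 2) := by
          simp [Finset.sum_insert hr]
    _ ≤ Real.sqrt (∑ i ∈ s, (u a i) ^ 2) + Real.sqrt (∑ i ∈ s, (∑ r ∈ T', u r i) ^ 2) :=
          l2_triangle s _ _
    _ ≤ Real.sqrt (∑ i ∈ s, (u a i) ^ 2) + ∑ r ∈ T', Real.sqrt (∑ i ∈ s, (u r i) ^ 2) := by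
          linarith [ih]
    _ = _ := by rw [Finset.sum_insert hr]

lemma strong_min {α : Type*} [Fintype α] {E : α → Type*} [∀ i, NormedAddCommGroup (E i)]
    [∀ i, NormedSpace ℝ (E i)] (σ : ℝ)
    (F : ((i : α) → E i) → ℝ)
    (P Y : (i : α) → E i)
    (hconv : ∀ l : ℝ, l ∈ Set.Ioo (0:ℝ) 1 →
      F (fun i => l • Y i + (1 - l) • P i) ≤
        l * F Y + (1 - l) * F P - σ / 2 * l * (1 - l) * ∑ i, ‖Y i - P i‖ ^ 2)
    (hP : ∀ z, F P ≤ F z) :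
    σ / 2 * ∑ i, ‖Y i - P i‖ ^ 2 ≤ F Y - F P := by
  set Q := ∑ i, ‖Y i - P i‖ ^ 2 with hQ
  have key : ∀ l : ℝ, l ∈ Set.Ioo (0:ℝ) 1 → σ / 2 * (1 - l) * Q ≤ F Y - F P := by
    intro l hl
    have h1 := hconv l hl
    have h2 := hP (fun i => l • Y i + (1 - l) • P i)
    have h3 : l * (σ / 2 * (1 - l) * Q) ≤ l * (F Y - F P) := by nlinarith
    exact le_of_mul_le_mul_left h3 hl.1
  have htend : Filter.Tendsto (fun l : ℝ => σ / 2 * (1 - l) * Q) (nhdsWithin 0 (Set.Ioi 0))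
      (nhds (σ / 2 * Q)) := by
    have hc : Continuous (fun l : ℝ => σ / 2 * (1 - l) * Q) := by continuity
    have h0 := (hc.tendsto 0).mono_left (nhdsWithin_le_nhds (s := Set.Ioi 0))
    simpa using h0
  have hev : ∀ᶠ l in nhdsWithin (0:ℝ) (Set.Ioi 0), σ / 2 * (1 - l) * Q ≤ F Y - F P := by
    filter_upwards [Ioo_mem_nhdsGT_of_mem (by norm_num : (0:ℝ) ∈ Set.Ico (0:ℝ) 1)] with l hl
    exact key l hl
  exact le_of_tendsto htend hev

lemma sqrt_ratio_le {k M : ℕ} (hk1 : 1 ≤ k) (hkM : k ≤ M) :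
    Real.sqrt ((k:ℝ) - 1) / k ≤ ((M:ℝ) - 1) / M := by
  have hM1 : (1:ℝ) ≤ (M:ℝ) := by exact_mod_cast le_trans hk1 hkM
  rcases eq_or_lt_of_le hk1 with h | h
  · rw [← h]
    simp only [Nat.cast_one, sub_self, Real.sqrt_zero, zero_div]
    apply div_nonneg (by linarith) (by linarith)
  · have hk2 : 2 ≤ k := h
    have hM2 : (2:ℝ) ≤ (M:ℝ) := by exact_mod_cast le_trans hk2 hkM
    have hkR : (2:ℝ) ≤ (k:ℝ) := by exact_mod_cast hk2
    have h1 : Real.sqrt ((k:ℝ) - 1) ≤ (k:ℝ) / 2 := by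
      rw [show ((k:ℝ)/2) = Real.sqrt (((k:ℝ)/2)^2) from (Real.sqrt_sq (by positivity)).symm]
      apply Real.sqrt_le_sqrt
      nlinarith
    calc Real.sqrt ((k:ℝ) - 1) / k ≤ ((k:ℝ)/2) / k := by
          apply div_le_div_of_nonneg_right h1 (by positivity)
    _ = 1/2 := by field_simp
    _ ≤ ((M:ℝ) - 1) / M := by
          rw [div_le_div_iff₀ (by norm_num) (by linarith)]
          linarith

set_option maxHeartbeats 2000000

/-- Proposition 2 of the paper, continuity of the primal and dual
solutions of the smoothed problem.

Setup: `N` agents, agent `i` has variable `x_i ∈ ℝ^{n i}`; the coupling constraints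
(the same at times `t` and `t+1`) are represented row-by-row: row `r ∈ Fin m` has
coupled agent set `S r`, coefficient block `a r j ∈ ℝ^{n j}` (zero when `j ∉ S r`)
and right-hand side `b r`, so `(Ax)_r = Σ_j a r j ⬝ x_j`,
`‖A‖_F² = Σ_r Σ_j ‖a r j‖²`, and `|s|^max = max_r |S r|`.

Each local objective `f t i` is twice continuously differentiable, `σ`-strongly
convex (`f(y) − f(x) ≥ ⟪∇f(x), y−x⟫ + (σ/2)‖x−y‖²`) and has `ν`-Lipschitz gradient.
`Fbar t` is the smoothed (LogSumExp) total objective, `Fbari t i` the smoothed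
augmented local objective of agent `i` as a function of its local view
`z : (j : Fin N) → ℝ^{n j}` (where `z i` is its own variable and `z j` the local copy
`x_j^i`; the weight of a row in `S r` is `1/|S r|`).  `Fbar (t+1) − Fbar t` is
Lipschitz with constant `κ` (w.r.t. the Euclidean norm of the stacked vector),
`xstar τ` minimizes `Fbar τ` for `τ ∈ {t, t+1}`, and the dual solution is
`ystar τ i j = −∇_{x_j^i} Fbari τ i` evaluated at the consensus-consistent point
built from `xstar τ`.  Then `‖x*[t+1] − x*[t]‖ ≤ κ/σ` and
`‖y*[t+1] − y*[t]‖ ≤ ‖A‖_F² ((|s|^max − 1)/|s|^max) β c κ/σ`, where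
`‖y‖² = Σ_i Σ_{j ∈ Nbr i} ‖y_{ij}‖²`. -/
theorem online_smoothed_primal_dual_continuity
    (N : ℕ) (n : Fin N → ℕ) (m : ℕ)
    (σ ν κ β c : ℝ) (hσ : 0 < σ) (hν : 0 < ν) (hκ : 0 ≤ κ) (hβ : 0 < β) (hc : 0 < c)
    -- coupling constraints, identical at times `t` and `t+1`
    (S : Fin m → Finset (Fin N))
    (a : (r : Fin m) → (j : Fin N) → EuclideanSpace ℝ (Fin (n j)))
    (b : Fin m → ℝ)
    (hA0 : ∀ r j, j ∉ S r → a r j = 0)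
    (smax : ℕ) (hsmax : smax = Finset.univ.sup fun r => (S r).card)
    -- local objectives over time: twice differentiable, σ-strongly convex,
    -- ν-Lipschitz gradient
    (f : ℕ → (i : Fin N) → EuclideanSpace ℝ (Fin (n i)) → ℝ)
    (hf_smooth : ∀ t i, ContDiff ℝ 2 (f t i))
    (hf_strong : ∀ t i x y, f t i y - f t i x ≥
        ⟪gradient (f t i) x, y - x⟫ + σ / 2 * ‖x - y‖ ^ 2)
    (hf_gradlip : ∀ t i x y,
        ‖gradient (f t i) x - gradient (f t i) y‖ ≤ ν * ‖x - y‖)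
    -- smoothed total objective
    (Fbar : ℕ → ((i : Fin N) → EuclideanSpace ℝ (Fin (n i))) → ℝ)
    (hFbar : ∀ t x, Fbar t x = (∑ i, f t i (x i)) +
        β / c * ∑ r, Real.log (Real.exp (c * ((∑ j, ∑ k, a r j k * x j k) - b r)) + 1))
    -- smoothed augmented local objectives (on local views with local copies)
    (Fbari : ℕ → (i : Fin N) → ((j : Fin N) → EuclideanSpace ℝ (Fin (n j))) → ℝ)
    (hFbari : ∀ t i z, Fbari t i z = f t i (z i) +
        β / c * ∑ r ∈ Finset.univ.filter (fun r => i ∈ S r),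
          (1 / ((S r).card : ℝ)) *
            Real.log (Real.exp (c * ((∑ j, ∑ k, a r j k * z j k) - b r)) + 1))
    -- neighbor sets
    (Nbr : Fin N → Finset (Fin N))
    (hNbr : ∀ i j, j ∈ Nbr i ↔ j ≠ i ∧ ∃ r, i ∈ S r ∧ j ∈ S r)
    (t : ℕ)
    -- `Fbar (t+1) − Fbar t` is κ-Lipschitz
    (hLip : ∀ x x', |(Fbar (t + 1) x - Fbar t x) - (Fbar (t + 1) x' - Fbar t x')| ≤
        κ * Real.sqrt (∑ i, ‖x i - x' i‖ ^ 2))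
    -- primal optimal solutions at times `t` and `t+1`
    (xstar : ℕ → (i : Fin N) → EuclideanSpace ℝ (Fin (n i)))
    (hxstar : ∀ τ, (τ = t ∨ τ = t + 1) → ∀ z, Fbar τ (xstar τ) ≤ Fbar τ z)
    -- dual solutions: `ystar τ i j = − ∇_{x_j^i} Fbari τ i` at the consensus point
    (ystar : ℕ → (i : Fin N) → (j : Fin N) → EuclideanSpace ℝ (Fin (n j)))
    (hystar : ∀ τ i j, ystar τ i j =
        - gradient (fun v => Fbari τ i (Function.update (xstar τ) j v)) (xstar τ j)) :
    Real.sqrt (∑ i, ‖xstar (t + 1) i - xstar t i‖ ^ 2) ≤ κ / σ ∧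
    Real.sqrt (∑ i, ∑ j ∈ Nbr i, ‖ystar (t + 1) i j - ystar t i j‖ ^ 2) ≤
      (∑ r, ∑ j, ‖a r j‖ ^ 2) * (((smax : ℝ) - 1) / (smax : ℝ)) * β * c * (κ / σ) := by
  -- ## Part 1: continuity of the primal solution
  have hconv : ∀ τ (P Y : (i : Fin N) → EuclideanSpace ℝ (Fin (n i))),
      ∀ l : ℝ, l ∈ Set.Ioo (0:ℝ) 1 →
      Fbar τ (fun i => l • Y i + (1 - l) • P i) ≤
        l * Fbar τ Y + (1 - l) * Fbar τ P - σ / 2 * l * (1 - l) * ∑ i, ‖Y i - P i‖ ^ 2 := by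
    intro τ P Y l hl
    obtain ⟨hl0, hl1⟩ := hl
    set z : (i : Fin N) → EuclideanSpace ℝ (Fin (n i)) :=
      fun i => l • Y i + (1 - l) • P i with hz
    have hfpart : ∀ i, f τ i (z i) ≤ l * f τ i (Y i) + (1 - l) * f τ i (P i)
        - σ / 2 * l * (1 - l) * ‖Y i - P i‖ ^ 2 := by
      intro i
      have h1 := hf_strong τ i (z i) (Y i)
      have h2 := hf_strong τ i (z i) (P i)
      have e1 : Y i - z i = (1 - l) • (Y i - P i) := by
        simp only [hz]; module
      have e2 : P i - z i = (-l) • (Y i - P i) := by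
        simp only [hz]; module
      rw [e1, real_inner_smul_right] at h1
      rw [e2, real_inner_smul_right] at h2
      have n1 : ‖z i - Y i‖ ^ 2 = (1 - l) ^ 2 * ‖Y i - P i‖ ^ 2 := by
        rw [← norm_neg (z i - Y i), neg_sub, e1, norm_smul]
        rw [Real.norm_eq_abs, abs_of_nonneg (by linarith : (0:ℝ) ≤ 1 - l)]
        ring
      have n2 : ‖z i - P i‖ ^ 2 = l ^ 2 * ‖Y i - P i‖ ^ 2 := by
        rw [← norm_neg (z i - P i), neg_sub, e2, norm_smul]
        rw [Real.norm_eq_abs, abs_neg, abs_of_nonneg hl0.le]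
        ring
      rw [n1] at h1
      rw [n2] at h2
      have c1 := mul_le_mul_of_nonneg_left h1.le hl0.le
      have c2 := mul_le_mul_of_nonneg_left h2.le (by linarith : (0:ℝ) ≤ 1 - l)
      nlinarith [c1, c2]
    have hlogpart : ∀ r : Fin m,
        Real.log (Real.exp (c * ((∑ j, ∑ k, a r j k * z j k) - b r)) + 1)
          ≤ l * Real.log (Real.exp (c * ((∑ j, ∑ k, a r j k * Y j k) - b r)) + 1)
            + (1 - l) * Real.log (Real.exp (c * ((∑ j, ∑ k, a r j k * P j k) - b r)) + 1) := by
      intro r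
      have harg : c * ((∑ j, ∑ k, a r j k * z j k) - b r)
          = l * (c * ((∑ j, ∑ k, a r j k * Y j k) - b r))
            + (1 - l) * (c * ((∑ j, ∑ k, a r j k * P j k) - b r)) := by
        have hsum : ∀ j, (∑ k, a r j k * z j k)
            = l * (∑ k, a r j k * Y j k) + (1 - l) * (∑ k, a r j k * P j k) := by
          intro j
          rw [Finset.mul_sum, Finset.mul_sum, ← Finset.sum_add_distrib]
          apply Finset.sum_congr rfl
          intro k _
          have hzk : z j k = l * Y j k + (1 - l) * P j k := by
            simp [hz, PiLp.add_apply, PiLp.smul_apply, smul_eq_mul]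
          rw [hzk]; ring
        rw [Finset.sum_congr rfl (fun j _ => hsum j), Finset.sum_add_distrib,
          ← Finset.mul_sum, ← Finset.mul_sum]
        ring
      rw [harg]
      have := softplus_convex.2 (Set.mem_univ (c * ((∑ j, ∑ k, a r j k * Y j k) - b r)))
        (Set.mem_univ (c * ((∑ j, ∑ k, a r j k * P j k) - b r)))
        hl0.le (by linarith : (0:ℝ) ≤ 1 - l) (by ring)
      simpa [smul_eq_mul] using this
    rw [hFbar τ z, hFbar τ Y, hFbar τ P]
    have hfs : ∑ i, f τ i (z i) ≤ (∑ i, (l * f τ i (Y i) + (1 - l) * f τ i (P i)))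
        - σ / 2 * l * (1 - l) * ∑ i, ‖Y i - P i‖ ^ 2 := by
      rw [Finset.mul_sum, ← Finset.sum_sub_distrib]
      apply Finset.sum_le_sum
      intro i _
      have := hfpart i
      linarith
    have hls : (∑ r, Real.log (Real.exp (c * ((∑ j, ∑ k, a r j k * z j k) - b r)) + 1))
        ≤ ∑ r, (l * Real.log (Real.exp (c * ((∑ j, ∑ k, a r j k * Y j k) - b r)) + 1)
            + (1 - l) * Real.log (Real.exp (c * ((∑ j, ∑ k, a r j k * P j k) - b r)) + 1)) :=
      Finset.sum_le_sum fun r _ => hlogpart r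
    have hbc : (0:ℝ) ≤ β / c := le_of_lt (div_pos hβ hc)
    have hls2 := mul_le_mul_of_nonneg_left hls hbc
    rw [Finset.sum_add_distrib, ← Finset.mul_sum, ← Finset.mul_sum] at hls2
    rw [Finset.sum_add_distrib, ← Finset.mul_sum, ← Finset.mul_sum] at hfs
    nlinarith [hfs, hls2]
  have hstrong : ∀ τ, (τ = t ∨ τ = t + 1) →
      ∀ Y, σ / 2 * ∑ i, ‖Y i - xstar τ i‖ ^ 2 ≤ Fbar τ Y - Fbar τ (xstar τ) :=
    fun τ hτ Y => strong_min σ (Fbar τ) (xstar τ) Y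
      (fun l hl => hconv τ (xstar τ) Y l hl) (hxstar τ hτ)
  set Q := ∑ i, ‖xstar (t + 1) i - xstar t i‖ ^ 2 with hQdef
  have hQ0 : 0 ≤ Q := Finset.sum_nonneg fun _ _ => sq_nonneg _
  have hQsymm : ∑ i, ‖xstar t i - xstar (t + 1) i‖ ^ 2 = Q := by
    apply Finset.sum_congr rfl
    intro i _
    rw [norm_sub_rev]
  have h1 := hstrong t (Or.inl rfl) (xstar (t + 1))
  have h2 := hstrong (t + 1) (Or.inr rfl) (xstar t)
  rw [hQsymm] at h2
  have hlip := hLip (xstar t) (xstar (t + 1))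
  rw [hQsymm] at hlip
  set D := Real.sqrt Q with hDdef
  have hD0 : 0 ≤ D := Real.sqrt_nonneg _
  have hDQ : D ^ 2 = Q := Real.sq_sqrt hQ0
  have hmain : σ * Q ≤ κ * D := by
    have habs : (Fbar (t + 1) (xstar t) - Fbar t (xstar t))
        - (Fbar (t + 1) (xstar (t + 1)) - Fbar t (xstar (t + 1))) ≤ κ * D :=
      le_trans (le_abs_self _) hlip
    linarith
  have hprimal : D ≤ κ / σ := by
    rcases eq_or_lt_of_le hD0 with h | h
    · rw [← h]; positivity
    · rw [le_div_iff₀ hσ]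
      nlinarith [hDQ]
  refine ⟨hprimal, ?_⟩
  -- ## Part 2: continuity of the dual solution
  -- explicit formula for the dual variables
  set sg : ℕ → Fin m → ℝ := fun τ r =>
    Real.exp (c * ((∑ j', ∑ k, a r j' k * xstar τ j' k) - b r)) /
      (Real.exp (c * ((∑ j', ∑ k, a r j' k * xstar τ j' k) - b r)) + 1) with hsg
  have hgrad : ∀ τ i (j : Fin N), j ≠ i → ystar τ i j
      = ∑ r ∈ Finset.univ.filter (fun r => i ∈ S r),
          (-(β * (1 / ((S r).card : ℝ)) * sg τ r)) • a r j := by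
    intro τ i j hji
    have hfun : (fun v => Fbari τ i (Function.update (xstar τ) j v))
        = fun v => f τ i (xstar τ i) + (β / c) * ∑ r ∈ Finset.univ.filter (fun r => i ∈ S r),
            (1 / ((S r).card : ℝ)) * Real.log (Real.exp (c * ⟪a r j, v⟫ +
              (c * ((∑ j' ∈ Finset.univ.erase j, ∑ k, a r j' k * xstar τ j' k) - b r))) + 1) := by
      funext v
      rw [hFbari]
      have hupd : Function.update (xstar τ) j v i = xstar τ i :=
        Function.update_of_ne (Ne.symm hji) _ _
      rw [hupd]
      congr 1
      congr 1
      apply Finset.sum_congr rfl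
      intro r _
      have hsplit : (∑ j', ∑ k, a r j' k * (Function.update (xstar τ) j v) j' k)
          = (∑ k, a r j k * v k)
            + ∑ j' ∈ Finset.univ.erase j, ∑ k, a r j' k * xstar τ j' k := by
        rw [← Finset.add_sum_erase _ _ (Finset.mem_univ j)]
        congr 1
        · simp
        · apply Finset.sum_congr rfl
          intro j' hj'
          have hne : Function.update (xstar τ) j v j' = xstar τ j' :=
            Function.update_of_ne (Finset.ne_of_mem_erase hj') _ _
          rw [hne]
      rw [hsplit, euclid_inner_eq_sum]
      ring_nf
    rw [hystar, hfun]
    rw [(hasGradientAt_softplus_sum (Finset.univ.filter (fun r => i ∈ S r))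
        (fun r => 1 / ((S r).card : ℝ))
        (fun r => c * ((∑ j' ∈ Finset.univ.erase j, ∑ k, a r j' k * xstar τ j' k) - b r))
        (fun r => a r j) (f τ i (xstar τ i)) (β / c) c (xstar τ j)).gradient]
    rw [← Finset.sum_neg_distrib]
    apply Finset.sum_congr rfl
    intro r _
    have harg : c * ⟪a r j, xstar τ j⟫
        + c * ((∑ j' ∈ Finset.univ.erase j, ∑ k, a r j' k * xstar τ j' k) - b r)
        = c * ((∑ j', ∑ k, a r j' k * xstar τ j' k) - b r) := by
      rw [euclid_inner_eq_sum,
        ← Finset.add_sum_erase _ (fun j' => ∑ k, a r j' k * xstar τ j' k) (Finset.mem_univ j)]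
      ring
    rw [harg, ← neg_smul]
    show (-(β / c * (1 / ((S r).card : ℝ)) * c * sg τ r)) • a r j
        = (-(β * (1 / ((S r).card : ℝ)) * sg τ r)) • a r j
    congr 1
    field_simp
  -- difference of the dual variables
  have hydiff : ∀ i (j : Fin N), j ≠ i →
      ystar (t + 1) i j - ystar t i j
        = ∑ r ∈ Finset.univ.filter (fun r => i ∈ S r),
            (β * (1 / ((S r).card : ℝ)) * (sg t r - sg (t + 1) r)) • a r j := by
    intro i j hji
    rw [hgrad (t + 1) i j hji, hgrad t i j hji, ← Finset.sum_sub_distrib]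
    apply Finset.sum_congr rfl
    intro r _
    rw [← sub_smul]
    congr 1
    ring
  -- the sigmoid difference bound
  have hdelta : ∀ r, |sg t r - sg (t + 1) r|
      ≤ c * Real.sqrt (∑ j', ‖a r j'‖ ^ 2) * D := by
    intro r
    have hl := sigmoid_lipschitz (c * ((∑ j', ∑ k, a r j' k * xstar t j' k) - b r))
      (c * ((∑ j', ∑ k, a r j' k * xstar (t + 1) j' k) - b r))
    have hexp : ∀ j' : Fin N, (∑ k, a r j' k * xstar (t + 1) j' k)
        - (∑ k, a r j' k * xstar t j' k)
        = ⟪a r j', xstar (t + 1) j' - xstar t j'⟫ := by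
      intro j'
      rw [euclid_inner_eq_sum, ← Finset.sum_sub_distrib]
      apply Finset.sum_congr rfl
      intro k _
      have hk : (xstar (t + 1) j' - xstar t j') k = xstar (t + 1) j' k - xstar t j' k := rfl
      rw [hk]; ring
    have hdiffsum : (∑ j', ∑ k, a r j' k * xstar (t + 1) j' k)
        - (∑ j', ∑ k, a r j' k * xstar t j' k)
        = ∑ j', ⟪a r j', xstar (t + 1) j' - xstar t j'⟫ := by
      rw [← Finset.sum_sub_distrib]
      exact Finset.sum_congr rfl fun j' _ => hexp j'
    have habs1 : |∑ j', ⟪a r j', xstar (t + 1) j' - xstar t j'⟫|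
        ≤ Real.sqrt (∑ j', ‖a r j'‖ ^ 2) * D := by
      calc |∑ j', ⟪a r j', xstar (t + 1) j' - xstar t j'⟫|
          ≤ ∑ j', |⟪a r j', xstar (t + 1) j' - xstar t j'⟫| :=
            Finset.abs_sum_le_sum_abs _ _
      _ ≤ ∑ j', ‖a r j'‖ * ‖xstar (t + 1) j' - xstar t j'‖ :=
            Finset.sum_le_sum fun j' _ => abs_real_inner_le_norm _ _
      _ ≤ Real.sqrt (∑ j', ‖a r j'‖ ^ 2)
            * Real.sqrt (∑ j', ‖xstar (t + 1) j' - xstar t j'‖ ^ 2) :=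
            sum_mul_le_sqrt_mul_sqrt _ _ _
      _ = Real.sqrt (∑ j', ‖a r j'‖ ^ 2) * D := by rw [hDdef, hQdef]
    have heq : c * ((∑ j', ∑ k, a r j' k * xstar t j' k) - b r)
        - c * ((∑ j', ∑ k, a r j' k * xstar (t + 1) j' k) - b r)
        = -(c * ∑ j', ⟪a r j', xstar (t + 1) j' - xstar t j'⟫) := by
      rw [← hdiffsum]; ring
    calc |sg t r - sg (t + 1) r|
        ≤ |c * ((∑ j', ∑ k, a r j' k * xstar t j' k) - b r)
            - c * ((∑ j', ∑ k, a r j' k * xstar (t + 1) j' k) - b r)| := by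
          simpa [hsg] using hl
    _ = c * |∑ j', ⟪a r j', xstar (t + 1) j' - xstar t j'⟫| := by
          rw [heq, abs_neg, abs_mul, abs_of_nonneg hc.le]
    _ ≤ c * (Real.sqrt (∑ j', ‖a r j'‖ ^ 2) * D) :=
          mul_le_mul_of_nonneg_left habs1 hc.le
    _ = c * Real.sqrt (∑ j', ‖a r j'‖ ^ 2) * D := by ring
  have hMnn : (0:ℝ) ≤ ((smax : ℝ) - 1) / (smax : ℝ) := by
    rcases Nat.eq_zero_or_pos smax with h | h
    · simp [h]
    · apply div_nonneg
      · have h1 : (1:ℝ) ≤ (smax : ℝ) := by exact_mod_cast h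
        linarith
      · positivity
  -- the scalar majorant
  set u : Fin m → Fin N → Fin N → ℝ := fun r i j =>
    if i ∈ S r then β * (1 / ((S r).card : ℝ)) * |sg t r - sg (t + 1) r| * ‖a r j‖ else 0
    with hu
  have hbound1 : ∀ i (j : Fin N), j ≠ i →
      ‖ystar (t + 1) i j - ystar t i j‖ ≤ ∑ r, u r i j := by
    intro i j hji
    rw [hydiff i j hji]
    calc ‖∑ r ∈ Finset.univ.filter (fun r => i ∈ S r),
          (β * (1 / ((S r).card : ℝ)) * (sg t r - sg (t + 1) r)) • a r j‖
        ≤ ∑ r ∈ Finset.univ.filter (fun r => i ∈ S r),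
            ‖(β * (1 / ((S r).card : ℝ)) * (sg t r - sg (t + 1) r)) • a r j‖ :=
          norm_sum_le _ _
    _ = ∑ r ∈ Finset.univ.filter (fun r => i ∈ S r), u r i j := by
          apply Finset.sum_congr rfl
          intro r hr
          have hiS : i ∈ S r := (Finset.mem_filter.mp hr).2
          have hkinv : (0:ℝ) ≤ 1 / ((S r).card : ℝ) := one_div_nonneg.mpr (Nat.cast_nonneg _)
          have huval : u r i j
              = β * (1 / ((S r).card : ℝ)) * |sg t r - sg (t + 1) r| * ‖a r j‖ := by
            simp only [hu, hiS, if_true]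
          rw [huval, norm_smul, Real.norm_eq_abs, abs_mul, abs_mul, abs_of_nonneg hβ.le,
            abs_of_nonneg hkinv]
    _ = ∑ r, u r i j := by
          apply Finset.sum_subset (Finset.subset_univ _)
          intro r _ hr
          have hiS : i ∉ S r := by
            intro hmem
            exact hr (Finset.mem_filter.mpr ⟨Finset.mem_univ r, hmem⟩)
          simp [hu, hiS]
  have hunn : ∀ r i j, 0 ≤ u r i j := by
    intro r i j
    simp only [hu]
    split_ifs
    · exact mul_nonneg (mul_nonneg (mul_nonneg hβ.le
        (one_div_nonneg.mpr (Nat.cast_nonneg _))) (abs_nonneg _)) (norm_nonneg _)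
    · exact le_refl 0
  -- chain of inequalities
  have hstep1 : Real.sqrt (∑ i, ∑ j ∈ Nbr i, ‖ystar (t + 1) i j - ystar t i j‖ ^ 2)
      ≤ Real.sqrt (∑ i, ∑ j ∈ Nbr i, (∑ r, u r i j) ^ 2) := by
    apply Real.sqrt_le_sqrt
    apply Finset.sum_le_sum
    intro i _
    apply Finset.sum_le_sum
    intro j hj
    have hji := ((hNbr i j).1 hj).1
    exact pow_le_pow_left₀ (norm_nonneg _) (hbound1 i j hji) 2
  have hmink : Real.sqrt (∑ i, ∑ j ∈ Nbr i, (∑ r, u r i j) ^ 2)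
      ≤ ∑ r, Real.sqrt (∑ i, ∑ j ∈ Nbr i, (u r i j) ^ 2) := by
    have h := minkowski_finset (Finset.univ.sigma Nbr) Finset.univ
      (fun r (p : Σ _ : Fin N, Fin N) => u r p.1 p.2)
    simpa [Finset.sum_sigma] using h
  -- per-row bound
  have hperr : ∀ r, Real.sqrt (∑ i, ∑ j ∈ Nbr i, (u r i j) ^ 2)
      ≤ β * c * D * (∑ j', ‖a r j'‖ ^ 2) * (((smax : ℝ) - 1) / (smax : ℝ)) := by
    intro r
    have hWnn : (0:ℝ) ≤ ∑ j', ‖a r j'‖ ^ 2 := Finset.sum_nonneg fun _ _ => sq_nonneg _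
    by_cases hcard : (S r).card = 0
    · have hSempty : S r = ∅ := Finset.card_eq_zero.mp hcard
      have hz : ∀ i j, u r i j = 0 := by
        intro i j; simp [hu, hSempty]
      have : (∑ i, ∑ j ∈ Nbr i, (u r i j) ^ 2) = 0 := by simp [hz]
      rw [this, Real.sqrt_zero]
      have : (0:ℝ) ≤ β * c * D := by positivity
      exact mul_nonneg (mul_nonneg this hWnn) hMnn
    · have hk1 : 1 ≤ (S r).card := Nat.one_le_iff_ne_zero.mpr hcard
      have hkM : (S r).card ≤ smax := by
        rw [hsmax]
        exact Finset.le_sup (f := fun r => (S r).card) (Finset.mem_univ r)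
      have hk0 : (0:ℝ) < ((S r).card : ℝ) := by exact_mod_cast hk1
      have hWS : (∑ j', ‖a r j'‖ ^ 2) = ∑ j' ∈ S r, ‖a r j'‖ ^ 2 := by
        symm
        apply Finset.sum_subset (Finset.subset_univ _)
        intro j' _ hj'
        rw [hA0 r j' hj']
        simp
      have hjb : ∀ i : Fin N, ∑ j ∈ Nbr i, ‖a r j‖ ^ 2
          ≤ (∑ j', ‖a r j'‖ ^ 2) - ‖a r i‖ ^ 2 := by
        intro i
        have hsub : Nbr i ⊆ Finset.univ.erase i := by
          intro j hj
          exact Finset.mem_erase.mpr ⟨((hNbr i j).1 hj).1, Finset.mem_univ j⟩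
        have h1 : ∑ j ∈ Nbr i, ‖a r j‖ ^ 2 ≤ ∑ j ∈ Finset.univ.erase i, ‖a r j‖ ^ 2 :=
          Finset.sum_le_sum_of_subset_of_nonneg hsub (fun _ _ _ => sq_nonneg _)
        have h2 : ‖a r i‖ ^ 2 + ∑ j ∈ Finset.univ.erase i, ‖a r j‖ ^ 2
            = ∑ j', ‖a r j'‖ ^ 2 :=
          Finset.add_sum_erase Finset.univ (fun j => ‖a r j‖ ^ 2) (Finset.mem_univ i)
        linarith
      have hkinv : (0:ℝ) ≤ 1 / ((S r).card : ℝ) := one_div_nonneg.mpr (Nat.cast_nonneg _)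
      set C : ℝ := β * (1 / ((S r).card : ℝ)) * |sg t r - sg (t + 1) r| with hC
      have hCnn : 0 ≤ C := by
        rw [hC]
        exact mul_nonneg (mul_nonneg hβ.le hkinv) (abs_nonneg _)
      have hmain2 : ∑ i, ∑ j ∈ Nbr i, (u r i j) ^ 2
          ≤ C ^ 2 * ((((S r).card : ℝ) - 1) * (∑ j', ‖a r j'‖ ^ 2)) := by
        have hterm : ∀ i : Fin N, ∑ j ∈ Nbr i, (u r i j) ^ 2
            ≤ if i ∈ S r then C ^ 2 * ((∑ j', ‖a r j'‖ ^ 2) - ‖a r i‖ ^ 2) else 0 := by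
          intro i
          by_cases hi : i ∈ S r
          · simp only [hi, if_true]
            have he : ∀ j, (u r i j) ^ 2 = C ^ 2 * ‖a r j‖ ^ 2 := by
              intro j
              rw [hu]
              simp only [hi, if_true]
              rw [hC]; ring
            calc ∑ j ∈ Nbr i, (u r i j) ^ 2 = ∑ j ∈ Nbr i, C ^ 2 * ‖a r j‖ ^ 2 :=
                  Finset.sum_congr rfl fun j _ => he j
            _ = C ^ 2 * ∑ j ∈ Nbr i, ‖a r j‖ ^ 2 := by rw [Finset.mul_sum]
            _ ≤ C ^ 2 * ((∑ j', ‖a r j'‖ ^ 2) - ‖a r i‖ ^ 2) :=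
                  mul_le_mul_of_nonneg_left (hjb i) (sq_nonneg _)
          · simp only [hi, if_false]
            apply Finset.sum_nonpos
            intro j hj
            have : u r i j = 0 := by simp [hu, hi]
            simp [this]
        calc ∑ i, ∑ j ∈ Nbr i, (u r i j) ^ 2
            ≤ ∑ i, (if i ∈ S r then C ^ 2 * ((∑ j', ‖a r j'‖ ^ 2) - ‖a r i‖ ^ 2) else 0) :=
              Finset.sum_le_sum fun i _ => hterm i
        _ = ∑ i ∈ S r, C ^ 2 * ((∑ j', ‖a r j'‖ ^ 2) - ‖a r i‖ ^ 2) := by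
              rw [Finset.sum_ite_mem]
              simp
        _ = C ^ 2 * (((S r).card : ℝ) * (∑ j', ‖a r j'‖ ^ 2) - ∑ i ∈ S r, ‖a r i‖ ^ 2) := by
              rw [← Finset.mul_sum, Finset.sum_sub_distrib, Finset.sum_const, nsmul_eq_mul]
        _ = C ^ 2 * ((((S r).card : ℝ) - 1) * (∑ j', ‖a r j'‖ ^ 2)) := by
              rw [← hWS]; ring
      have hk1R : (1:ℝ) ≤ ((S r).card : ℝ) := by exact_mod_cast hk1
      have hsqrt1 : Real.sqrt (∑ i, ∑ j ∈ Nbr i, (u r i j) ^ 2)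
          ≤ C * Real.sqrt ((((S r).card : ℝ) - 1) * (∑ j', ‖a r j'‖ ^ 2)) := by
        calc Real.sqrt (∑ i, ∑ j ∈ Nbr i, (u r i j) ^ 2)
            ≤ Real.sqrt (C ^ 2 * ((((S r).card : ℝ) - 1) * (∑ j', ‖a r j'‖ ^ 2))) :=
              Real.sqrt_le_sqrt hmain2
        _ = C * Real.sqrt ((((S r).card : ℝ) - 1) * (∑ j', ‖a r j'‖ ^ 2)) := by
              rw [Real.sqrt_mul (sq_nonneg _), Real.sqrt_sq hCnn]
      have hsplitW : Real.sqrt ((((S r).card : ℝ) - 1) * (∑ j', ‖a r j'‖ ^ 2))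
          = Real.sqrt (((S r).card : ℝ) - 1) * Real.sqrt (∑ j', ‖a r j'‖ ^ 2) :=
        Real.sqrt_mul (by linarith) _
      calc Real.sqrt (∑ i, ∑ j ∈ Nbr i, (u r i j) ^ 2)
          ≤ C * (Real.sqrt (((S r).card : ℝ) - 1) * Real.sqrt (∑ j', ‖a r j'‖ ^ 2)) := by
            rw [← hsplitW]; exact hsqrt1
      _ ≤ (β * (1 / ((S r).card : ℝ)) * (c * Real.sqrt (∑ j', ‖a r j'‖ ^ 2) * D))
            * (Real.sqrt (((S r).card : ℝ) - 1) * Real.sqrt (∑ j', ‖a r j'‖ ^ 2)) := by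
            apply mul_le_mul_of_nonneg_right _
              (mul_nonneg (Real.sqrt_nonneg _) (Real.sqrt_nonneg _))
            rw [hC]
            exact mul_le_mul_of_nonneg_left (hdelta r) (mul_nonneg hβ.le hkinv)
      _ = β * c * D * (Real.sqrt (∑ j', ‖a r j'‖ ^ 2) * Real.sqrt (∑ j', ‖a r j'‖ ^ 2))
            * (Real.sqrt (((S r).card : ℝ) - 1) / ((S r).card : ℝ)) := by ring
      _ = β * c * D * (∑ j', ‖a r j'‖ ^ 2)
            * (Real.sqrt (((S r).card : ℝ) - 1) / ((S r).card : ℝ)) := by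
            rw [Real.mul_self_sqrt hWnn]
      _ ≤ β * c * D * (∑ j', ‖a r j'‖ ^ 2) * (((smax : ℝ) - 1) / (smax : ℝ)) := by
            apply mul_le_mul_of_nonneg_left (sqrt_ratio_le hk1 hkM)
            exact mul_nonneg (mul_nonneg (mul_nonneg hβ.le hc.le) hD0) hWnn
  -- final assembly
  have hfinal : ∑ r, β * c * D * (∑ j', ‖a r j'‖ ^ 2) * (((smax : ℝ) - 1) / (smax : ℝ))
      = (∑ r, ∑ j', ‖a r j'‖ ^ 2) * (((smax : ℝ) - 1) / (smax : ℝ)) * β * c * D := by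
    have h1 : ∀ r : Fin m, β * c * D * (∑ j', ‖a r j'‖ ^ 2) * (((smax : ℝ) - 1) / (smax : ℝ))
        = (∑ j', ‖a r j'‖ ^ 2) * ((((smax : ℝ) - 1) / (smax : ℝ)) * β * c * D) :=
      fun r => by ring
    rw [Finset.sum_congr rfl fun r _ => h1 r, ← Finset.sum_mul]
    ring
  have hWsumnn : (0:ℝ) ≤ ∑ r, ∑ j', ‖a r j'‖ ^ 2 :=
    Finset.sum_nonneg fun r _ => Finset.sum_nonneg fun j' _ => sq_nonneg _
  calc Real.sqrt (∑ i, ∑ j ∈ Nbr i, ‖ystar (t + 1) i j - ystar t i j‖ ^ 2)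
      ≤ Real.sqrt (∑ i, ∑ j ∈ Nbr i, (∑ r, u r i j) ^ 2) := hstep1
  _ ≤ ∑ r, Real.sqrt (∑ i, ∑ j ∈ Nbr i, (u r i j) ^ 2) := hmink
  _ ≤ ∑ r, β * c * D * (∑ j', ‖a r j'‖ ^ 2) * (((smax : ℝ) - 1) / (smax : ℝ)) :=
        Finset.sum_le_sum fun r _ => hperr r
  _ = (∑ r, ∑ j', ‖a r j'‖ ^ 2) * (((smax : ℝ) - 1) / (smax : ℝ)) * β * c * D := hfinal
  _ ≤ (∑ r, ∑ j', ‖a r j'‖ ^ 2) * (((smax : ℝ) - 1) / (smax : ℝ)) * β * c * (κ / σ) := by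
        apply mul_le_mul_of_nonneg_left hprimal
        exact mul_nonneg (mul_nonneg (mul_nonneg hWsumnn hMnn) hβ.le) hc.le
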